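/- Let ρ : ℝ → ℝ, let x ∈ ℝ² (with the Euclidean norm) with x ≠ 0, set r = ‖x‖, and assume ρ is differentiable at r with derivative ρ'(r). Define F(y) = (ρ(‖y‖)/‖y‖) • y for y ≠ 0 (and arbitrarily at 0). Then F is differentiable at x, its Fréchet derivative at x is the linear map v ↦ (ρ(r)/r)·(v − (⟨x,v⟩/r²) • x) + ρ'(r)·(⟨x,v⟩/r²) • x, and the operator norm of this derivative equals max(|ρ(r)|/r, |ρ'(r)|). -/

import Mathlib

open scoped RealInnerProductSpace

private lemma hasFDerivAt_norm_aux {E : Type*} [NormedAddCommGroup E]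
    [InnerProductSpace ℝ E] {x : E} (hx : x ≠ 0) :
    HasFDerivAt (fun y : E => ‖y‖) (‖x‖⁻¹ • innerSL ℝ x) x := by
  have hx2 : ‖x‖ ^ 2 ≠ 0 := pow_ne_zero _ (norm_ne_zero_iff.mpr hx)
  have h1 : HasFDerivAt (fun y : E => ‖y‖ ^ 2)
      (2 • (innerSL ℝ x).comp (ContinuousLinearMap.id ℝ E)) x := by
    simpa using (hasFDerivAt_id x).norm_sq
  have h2 := (Real.hasDerivAt_sqrt hx2).comp_hasFDerivAt x h1
  have hfun : (fun y : E => Real.sqrt (‖y‖ ^ 2)) = fun y : E => ‖y‖ := by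
    funext y; exact Real.sqrt_sq (norm_nonneg y)
  rw [Function.comp_def, hfun] at h2
  convert h2 using 1
  all_goals try rfl
  ext v
  have : Real.sqrt (‖x‖ ^ 2) = ‖x‖ := Real.sqrt_sq (norm_nonneg x)
  simp [this, smul_smul]
  field_simp

/-- Let `ρ : ℝ → ℝ`, let `x ∈ ℝ²` with `x ≠ 0`, set `r = ‖x‖`, and assume
`ρ` is differentiable at `r` with derivative `ρ'`. Define `F(y) = (ρ(‖y‖)/‖y‖) • y` for
`y ≠ 0` (and arbitrarily at `0`). Then `F` is differentiable at `x`, its Fréchet derivative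
at `x` is the linear map `v ↦ (ρ(r)/r)·(v − (⟨x,v⟩/r²) • x) + ρ'(r)·(⟨x,v⟩/r²) • x`, and the
operator norm of this derivative equals `max(|ρ(r)|/r, |ρ'(r)|)`. -/
theorem radial_map_fderiv
    (ρ : ℝ → ℝ) (ρ' : ℝ)
    (x : EuclideanSpace ℝ (Fin 2)) (hx : x ≠ 0)
    (r : ℝ) (hr : r = ‖x‖)
    (hρ : HasDerivAt ρ ρ' r)
    (F : EuclideanSpace ℝ (Fin 2) → EuclideanSpace ℝ (Fin 2))
    (hF : ∀ y : EuclideanSpace ℝ (Fin 2), y ≠ 0 → F y = (ρ ‖y‖ / ‖y‖) • y)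
    (proj T : EuclideanSpace ℝ (Fin 2) →L[ℝ] EuclideanSpace ℝ (Fin 2))
    (hproj : ∀ v, proj v = (⟪x, v⟫ / r ^ 2) • x)
    (hT : T = (ρ r / r) • (ContinuousLinearMap.id ℝ (EuclideanSpace ℝ (Fin 2)) - proj)
        + ρ' • proj) :
    HasFDerivAt F T x ∧ ‖T‖ = max (|ρ r| / r) |ρ'| := by
  subst hr
  have hr0 : (0:ℝ) < ‖x‖ := norm_pos_iff.mpr hx
  have rne : ‖x‖ ≠ 0 := ne_of_gt hr0
  -- derivative part
  have hn : HasFDerivAt (fun y : EuclideanSpace ℝ (Fin 2) => ‖y‖)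
      (‖x‖⁻¹ • innerSL ℝ x) x := hasFDerivAt_norm_aux hx
  have hφ : HasDerivAt (fun t : ℝ => ρ t / t)
      ((ρ' * ‖x‖ - ρ ‖x‖ * 1) / ‖x‖ ^ 2) ‖x‖ := hρ.div (hasDerivAt_id ‖x‖) rne
  have hc : HasFDerivAt (fun y : EuclideanSpace ℝ (Fin 2) => ρ ‖y‖ / ‖y‖)
      (((ρ' * ‖x‖ - ρ ‖x‖ * 1) / ‖x‖ ^ 2) • (‖x‖⁻¹ • innerSL ℝ x)) x :=
    hφ.comp_hasFDerivAt x hn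
  have hg : HasFDerivAt (fun y : EuclideanSpace ℝ (Fin 2) => (ρ ‖y‖ / ‖y‖) • y)
      ((ρ ‖x‖ / ‖x‖) • ContinuousLinearMap.id ℝ (EuclideanSpace ℝ (Fin 2))
        + ((((ρ' * ‖x‖ - ρ ‖x‖ * 1) / ‖x‖ ^ 2) • (‖x‖⁻¹ • innerSL ℝ x)).smulRight x)) x :=
    hc.smul (hasFDerivAt_id x)
  have hTD : T = (ρ ‖x‖ / ‖x‖) • ContinuousLinearMap.id ℝ (EuclideanSpace ℝ (Fin 2))
      + ((((ρ' * ‖x‖ - ρ ‖x‖ * 1) / ‖x‖ ^ 2) • (‖x‖⁻¹ • innerSL ℝ x)).smulRight x) := by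
    rw [hT]
    refine ContinuousLinearMap.ext fun v => ?_
    simp only [ContinuousLinearMap.add_apply, ContinuousLinearMap.smul_apply,
      ContinuousLinearMap.sub_apply, ContinuousLinearMap.coe_id', id_eq,
      ContinuousLinearMap.smulRight_apply, innerSL_apply_apply, hproj]
    match_scalars
    · field_simp
    · field_simp; simp only [smul_eq_mul]; field_simp; ring
  have hFg : F =ᶠ[nhds x] fun y => (ρ ‖y‖ / ‖y‖) • y := by
    filter_upwards [compl_singleton_mem_nhds hx] with y hy
    exact hF y hy
  have hDF : HasFDerivAt F T x := by
    rw [hTD]; exact hg.congr_of_eventuallyEq hFg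
  refine ⟨hDF, ?_⟩
  -- norm part
  set a := ρ ‖x‖ / ‖x‖ with ha
  have habs : |a| = |ρ ‖x‖| / ‖x‖ := by
    rw [ha, abs_div, abs_of_pos hr0]
  have hprojx : proj x = x := by
    rw [hproj, real_inner_self_eq_norm_sq, div_self (pow_ne_zero _ rne), one_smul]
  have hTapp : ∀ v, T v = a • (v - proj v) + ρ' • proj v := by
    intro v; rw [hT]; simp
  have horth : ∀ v : EuclideanSpace ℝ (Fin 2), ⟪v - proj v, proj v⟫ = 0 := by
    intro v
    have h1 : ⟪x, v - proj v⟫ = 0 := by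
      rw [inner_sub_right, hproj, real_inner_smul_right, real_inner_self_eq_norm_sq,
        div_mul_cancel₀ _ (pow_ne_zero 2 rne), sub_self]
    rw [real_inner_comm]
    nth_rewrite 1 [hproj]
    rw [real_inner_smul_left, h1, mul_zero]
  set M := max (|ρ ‖x‖| / ‖x‖) |ρ'| with hM
  have hM0 : 0 ≤ M := le_trans (abs_nonneg ρ') (le_max_right _ _)
  have haM : |a| ≤ M := habs ▸ le_max_left _ _
  have hbM : |ρ'| ≤ M := le_max_right _ _
  have hub : ‖T‖ ≤ M := by
    refine T.opNorm_le_bound hM0 fun v => ?_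
    have key : ‖T v‖ ^ 2 ≤ (M * ‖v‖) ^ 2 := by
      have h1 : ‖T v‖ ^ 2 = a ^ 2 * ‖v - proj v‖ ^ 2 + ρ' ^ 2 * ‖proj v‖ ^ 2 := by
        rw [hTapp, norm_add_sq_real, real_inner_smul_left, real_inner_smul_right,
          horth, norm_smul, norm_smul, mul_pow, mul_pow]
        simp [sq_abs, Real.norm_eq_abs]
        all_goals ring
      have h2 : ‖v‖ ^ 2 = ‖v - proj v‖ ^ 2 + ‖proj v‖ ^ 2 := by
        have : v = (v - proj v) + proj v := by abel
        nth_rewrite 1 [this]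
        rw [norm_add_sq_real, horth]
        ring
      have ha2 : a ^ 2 ≤ M ^ 2 := by
        rw [← sq_abs a]; exact pow_le_pow_left₀ (abs_nonneg _) haM 2
      have hb2 : ρ' ^ 2 ≤ M ^ 2 := by
        rw [← sq_abs ρ']; exact pow_le_pow_left₀ (abs_nonneg _) hbM 2
      calc ‖T v‖ ^ 2 = a ^ 2 * ‖v - proj v‖ ^ 2 + ρ' ^ 2 * ‖proj v‖ ^ 2 := h1
        _ ≤ M ^ 2 * ‖v - proj v‖ ^ 2 + M ^ 2 * ‖proj v‖ ^ 2 := by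
            gcongr <;> positivity
        _ = M ^ 2 * (‖v - proj v‖ ^ 2 + ‖proj v‖ ^ 2) := by ring
        _ = (M * ‖v‖) ^ 2 := by rw [← h2]; ring
    exact le_of_pow_le_pow_left₀ two_ne_zero (by positivity) key
  have hlb1 : |ρ'| ≤ ‖T‖ := by
    have h1 : T x = ρ' • x := by
      rw [hTapp, hprojx]; simp
    have h2 : ‖T x‖ ≤ ‖T‖ * ‖x‖ := T.le_opNorm x
    rw [h1, norm_smul, Real.norm_eq_abs] at h2
    exact le_of_mul_le_mul_right h2 hr0
  set u : EuclideanSpace ℝ (Fin 2) := (WithLp.equiv 2 (Fin 2 → ℝ)).symm ![-(x 1), x 0]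
    with hu
  have hxu : ⟪x, u⟫ = 0 := by
    simp [hu, PiLp.inner_apply, Fin.sum_univ_two, RCLike.inner_apply]
    ring
  have hnu : ‖u‖ = ‖x‖ := by
    rw [EuclideanSpace.norm_eq, EuclideanSpace.norm_eq]
    congr 1
    simp [hu, Fin.sum_univ_two]
    ring
  have hlb2 : |a| ≤ ‖T‖ := by
    have hpu : proj u = 0 := by rw [hproj, hxu]; simp
    have h1 : T u = a • u := by rw [hTapp, hpu]; simp
    have h2 : ‖T u‖ ≤ ‖T‖ * ‖u‖ := T.le_opNorm u
    rw [h1, norm_smul, Real.norm_eq_abs, hnu] at h2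
    exact le_of_mul_le_mul_right h2 hr0
  exact le_antisymm hub (max_le (habs ▸ hlb2) hlb1)
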